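/- Let p be a prime, 0 < α ≤ 1, and (x_n)_{n∈ℕ} ⊂ ℤ_p. Suppose there exists a function F: ℕ × ℕ → ℝ which is monotonically increasing in its first argument and satisfies, for all N and all K ≤ N/2, max_{s=1,…,K} | (N^{−α}/μ(D_p(0, s/N^α)))·#{1 ≤ l ≠ m ≤ N : |x_l − x_m|_p < s/N^α} − N^{2−α} | < F(K,N). Then there exists an integer N₀ > 0 such that for all N ≥ N₀ and all K with (1/2)·N^{(2/5)α} ≤ K ≤ N^{(2/5)α}, one has N·D_N(x_n) ≤ 5·max( N^{1−(1/5)α}, √(N^α · F(K², N)) ). -/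

import Mathlib

open MeasureTheory Filter
open scoped Classical

/-- The closed ball `D_p(z,s) = {x ∈ ℤ_p : |x - z|_p ≤ s}`. -/
def padicBall (p : ℕ) [Fact p.Prime] (z : ℤ_[p]) (s : ℝ) : Set ℤ_[p] :=
  {x : ℤ_[p] | ‖x - z‖ ≤ s}

/-- The p-adic discrepancy of the first `N` terms of a sequence `x : ℕ → ℤ_[p]`
(indexed starting at 1):
`D_N(x) = sup_{z ∈ ℤ_p, k ∈ ℕ} | #{1 ≤ n ≤ N : x_n ∈ D_p(z, p^{-k})}/N - p^{-k} |`. -/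
noncomputable def padicDiscrepancy (p : ℕ) [Fact p.Prime] (x : ℕ → ℤ_[p]) (N : ℕ) : ℝ :=
  ⨆ z : ℤ_[p], ⨆ k : ℕ,
    |(((Finset.Icc 1 N).filter fun n =>
        x n ∈ padicBall p z ((p : ℝ) ^ (-(k : ℤ)))).card : ℝ) / N - (p : ℝ) ^ (-(k : ℤ))|

/-- `#{1 ≤ i ≠ j ≤ N : |x_i - x_j|_p ≤ t}`. -/
noncomputable def pairCount (p : ℕ) [Fact p.Prime] (x : ℕ → ℤ_[p]) (N : ℕ) (t : ℝ) : ℕ :=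
  ((Finset.Icc 1 N ×ˢ Finset.Icc 1 N).filter
    fun ij => ij.1 ≠ ij.2 ∧ ‖x ij.1 - x ij.2‖ ≤ t).card

/-- The pair correlation function
`F_{N,α,p}(s) = (1/N²)·(1/μ(D_p(0, s/N^α)))·#{1 ≤ i ≠ j ≤ N : |x_i - x_j|_p ≤ s/N^α}`. -/
noncomputable def pairF (p : ℕ) [Fact p.Prime] [MeasurableSpace ℤ_[p]]
    (μ : Measure ℤ_[p]) (x : ℕ → ℤ_[p]) (α : ℝ) (N : ℕ) (s : ℝ) : ℝ :=
  (1 / (N : ℝ) ^ 2) * (1 / (μ (padicBall p 0 (s / (N : ℝ) ^ α))).toReal) *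
    (pairCount p x N (s / (N : ℝ) ^ α) : ℝ)

/-- `x` has weak Poissonian pair correlations for `α` (w.r.t. the normalized Haar
measure `μ`) if `F_{N,α,p}(s) → 1` for all `s > 0`. -/
def HasWeakPPC (p : ℕ) [Fact p.Prime] [MeasurableSpace ℤ_[p]] (μ : Measure ℤ_[p])
    (x : ℕ → ℤ_[p]) (α : ℝ) : Prop :=
  ∀ s : ℝ, 0 < s → Tendsto (fun N : ℕ => pairF p μ x α N s) atTop (nhds 1)

/-- `#{1 ≤ l ≠ m ≤ N : |x_l - x_m|_p < t}` (strict inequality). -/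
noncomputable def pairCountLt (p : ℕ) [Fact p.Prime] (x : ℕ → ℤ_[p]) (N : ℕ) (t : ℝ) : ℕ :=
  ((Finset.Icc 1 N ×ˢ Finset.Icc 1 N).filter
    fun ij => ij.1 ≠ ij.2 ∧ ‖x ij.1 - x ij.2‖ < t).card

open scoped ENNReal

noncomputable def resCount (p : ℕ) [Fact p.Prime] (x : ℕ → ℤ_[p]) (N k : ℕ)
    (a : ZMod (p^k)) : ℕ :=
  ((Finset.Icc 1 N).filter fun n => PadicInt.toZModPow k (x n) = a).card

lemma norm_le_iff_zmod (p : ℕ) [Fact p.Prime] (k : ℕ) (y : ℤ_[p]) :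
    ‖y‖ ≤ (p : ℝ) ^ (-(k:ℤ)) ↔ PadicInt.toZModPow k y = 0 := by
  rw [PadicInt.norm_le_pow_iff_mem_span_pow, ← PadicInt.ker_toZModPow, RingHom.mem_ker]

lemma sum_resCount (p : ℕ) [Fact p.Prime] (x : ℕ → ℤ_[p]) (N k : ℕ) :
    ∑ a : ZMod (p^k), resCount p x N k a = N := by
  have := Finset.card_eq_sum_card_fiberwise
    (f := fun n => PadicInt.toZModPow k (x n)) (s := Finset.Icc 1 N) (t := Finset.univ)
    (fun x _ => Finset.mem_univ _)
  rw [Nat.card_Icc] at this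
  simpa [resCount] using this.symm

lemma pairCountLt_eq (p : ℕ) [Fact p.Prime] (x : ℕ → ℤ_[p]) (N k : ℕ) (t : ℝ)
    (h1 : (p : ℝ) ^ (-(k:ℤ)) < t) (h2 : t ≤ (p : ℝ) ^ (-(k:ℤ) + 1)) :
    pairCountLt p x N t + N = ∑ a : ZMod (p^k), (resCount p x N k a)^2 := by
  classical
  set f := PadicInt.toZModPow (p := p) k with hf
  have hnorm : ∀ y : ℤ_[p], ‖y‖ < t ↔ f y = 0 := by
    intro y
    rw [← norm_le_iff_zmod p k y]
    constructor
    · intro h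
      rw [PadicInt.norm_le_pow_iff_norm_lt_pow_add_one]
      exact lt_of_lt_of_le h h2
    · intro h; exact lt_of_le_of_lt h h1
  have hpred : ∀ ij : ℕ × ℕ, (ij.1 ≠ ij.2 ∧ ‖x ij.1 - x ij.2‖ < t) ↔
      (ij.1 ≠ ij.2 ∧ f (x ij.1) = f (x ij.2)) := by
    intro ij
    rw [hnorm, map_sub, sub_eq_zero]
  set I := Finset.Icc 1 N
  set S := (I ×ˢ I).filter (fun ij => f (x ij.1) = f (x ij.2)) with hS
  have hcard1 : pairCountLt p x N t = (S.filter fun ij => ij.1 ≠ ij.2).card := by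
    rw [pairCountLt, hS, Finset.filter_filter]
    congr 1
    apply Finset.filter_congr
    intro ij _
    rw [hpred ij, and_comm]
  have hdiag : (S.filter fun ij => ij.1 = ij.2).card = N := by
    rw [hS, Finset.filter_filter]
    have : ((I ×ˢ I).filter fun ij => f (x ij.1) = f (x ij.2) ∧ ij.1 = ij.2)
        = I.diag := by
      ext ⟨i, j⟩
      simp only [Finset.mem_filter, Finset.mem_diag, Finset.mem_product]
      constructor
      · rintro ⟨⟨hi, _⟩, _, h⟩; exact ⟨hi, h⟩
      · rintro ⟨hi, h⟩; subst h; exact ⟨⟨hi, hi⟩, rfl, rfl⟩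
    rw [this, Finset.diag_card, Nat.card_Icc]
    omega
  have hsplit : (S.filter fun ij => ij.1 = ij.2).card
      + (S.filter fun ij => ¬ ij.1 = ij.2).card = S.card :=
    Finset.card_filter_add_card_filter_not _
  have hfib : S.card = ∑ a : ZMod (p^k), (resCount p x N k a)^2 := by
    rw [Finset.card_eq_sum_card_fiberwise
      (f := fun ij => f (x ij.1)) (t := Finset.univ) (fun _ _ => Finset.mem_univ _)]
    apply Finset.sum_congr rfl
    intro a _
    have : (S.filter fun ij => f (x ij.1) = a)
        = (I.filter fun n => f (x n) = a) ×ˢ (I.filter fun n => f (x n) = a) := by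
      rw [hS, Finset.filter_filter, ← Finset.filter_product]
      apply Finset.filter_congr
      intro ij _
      constructor
      · rintro ⟨h1', h2'⟩; exact ⟨h2', by rw [← h1', h2']⟩
      · rintro ⟨h1', h2'⟩; exact ⟨by rw [h1', h2'], h1'⟩
    rw [this, Finset.card_product, resCount, sq]
  simp only [ne_eq] at hcard1
  rw [hcard1, ← hfib, ← hsplit, hdiag]
  omega

lemma measure_res (p : ℕ) [Fact p.Prime] [MeasurableSpace ℤ_[p]] [BorelSpace ℤ_[p]]
    (μ : Measure ℤ_[p]) [μ.IsAddHaarMeasure] [IsProbabilityMeasure μ] (k : ℕ) :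
    μ {y : ℤ_[p] | PadicInt.toZModPow k y = 0} = ((p : ℝ≥0∞) ^ k)⁻¹ := by
  classical
  haveI : NeZero (p ^ k) := ⟨pow_ne_zero _ (Nat.Prime.ne_zero Fact.out)⟩
  set f := PadicInt.toZModPow (p := p) k with hf
  set S : Set ℤ_[p] := {y | f y = 0} with hSdef
  have hSnorm : S = {y : ℤ_[p] | ‖y‖ ≤ (p : ℝ) ^ (-(k:ℤ))} := by
    ext y
    simp only [hSdef, Set.mem_setOf_eq, hf]
    rw [PadicInt.norm_le_pow_iff_mem_span_pow, ← PadicInt.ker_toZModPow, RingHom.mem_ker]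
  have hSmeas : MeasurableSet S := by
    rw [hSnorm]
    exact (isClosed_le (continuous_norm) continuous_const).measurableSet
  have hfiber : ∀ a : ZMod (p ^ k), f ⁻¹' {a} = (fun y => (-((a.val : ℤ_[p]))) + y) ⁻¹' S := by
    intro a
    ext y
    simp only [Set.mem_preimage, Set.mem_singleton_iff, hSdef, Set.mem_setOf_eq]
    rw [map_add, map_neg, map_natCast, ZMod.natCast_zmod_val, neg_add_eq_zero]
    exact eq_comm
  have hμfiber : ∀ a : ZMod (p ^ k), μ (f ⁻¹' {a}) = μ S := by
    intro a
    rw [hfiber a]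
    exact measure_preimage_add μ _ S
  have hdisj : Pairwise (Function.onFun Disjoint fun a : ZMod (p ^ k) => f ⁻¹' {a}) := by
    intro a b hab
    simp only [Function.onFun, Set.disjoint_left]
    rintro y hy hy'
    simp only [Set.mem_preimage, Set.mem_singleton_iff] at hy hy'
    exact hab (hy ▸ hy')
  have hmeasfiber : ∀ a : ZMod (p ^ k), MeasurableSet (f ⁻¹' {a}) := by
    intro a; rw [hfiber a]
    exact hSmeas.preimage (measurable_const_add _)
  have hunion : (⋃ a : ZMod (p ^ k), f ⁻¹' {a}) = Set.univ := by
    ext y; simp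
  have h1 : (1 : ℝ≥0∞) = ∑' a : ZMod (p ^ k), μ (f ⁻¹' {a}) := by
    rw [← measure_iUnion hdisj hmeasfiber, hunion, measure_univ]
  rw [tsum_fintype] at h1
  simp only [hμfiber, Finset.sum_const, Finset.card_univ, ZMod.card, nsmul_eq_mul] at h1
  push_cast at h1
  have hpk : ((p : ℝ≥0∞) ^ k) ≠ 0 := by
    apply pow_ne_zero
    simp [Nat.Prime.ne_zero (Fact.out : p.Prime)]
  have hpk' : ((p : ℝ≥0∞) ^ k) ≠ ⊤ := by
    exact ENNReal.pow_ne_top (by simp)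
  calc μ S = ((p : ℝ≥0∞) ^ k)⁻¹ * (((p : ℝ≥0∞) ^ k) * μ S) := by
        rw [← mul_assoc, ENNReal.inv_mul_cancel hpk hpk', one_mul]
    _ = ((p : ℝ≥0∞) ^ k)⁻¹ := by
        rw [← h1]
        · rw [mul_one]
        

lemma card_castHom_fiber (p : ℕ) [Fact p.Prime] (k k' : ℕ) (h : k ≤ k') (a : ZMod (p^k)) :
    (Finset.univ.filter fun b : ZMod (p^k') =>
      ZMod.castHom (pow_dvd_pow p h) (ZMod (p^k)) b = a).card = p^(k'-k) := by
  classical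
  haveI : NeZero (p ^ k') := ⟨pow_ne_zero _ (Nat.Prime.ne_zero Fact.out)⟩
  haveI : NeZero (p ^ k) := ⟨pow_ne_zero _ (Nat.Prime.ne_zero Fact.out)⟩
  set φ := ZMod.castHom (pow_dvd_pow p h) (ZMod (p^k)) with hφ
  set c : ZMod (p^k) → ℕ := fun a => (Finset.univ.filter fun b : ZMod (p^k') => φ b = a).card
    with hc
  have hφcast : ∀ a₀ : ZMod (p^k), φ ((a₀.val : ZMod (p^k'))) = a₀ := by
    intro a₀
    rw [map_natCast, ZMod.natCast_zmod_val]
  have heq : ∀ a₁ a₂ : ZMod (p^k), c a₁ = c a₂ := by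
    intro a₁ a₂
    set d : ZMod (p^k') := ((a₂ - a₁).val : ZMod (p^k')) with hd
    have hφd : φ d = a₂ - a₁ := hφcast _
    apply Finset.card_bij' (fun b _ => b + d) (fun b _ => b - d)
    · intro b hb
      simp only [Finset.mem_filter, Finset.mem_univ, true_and] at hb ⊢
      rw [map_add, hb, hφd]; ring
    · intro b hb
      simp only [Finset.mem_filter, Finset.mem_univ, true_and] at hb ⊢
      rw [map_sub, hb, hφd]; ring
    · intro b _; ring
    · intro b _; ring
  have htot : ∑ a' : ZMod (p^k), c a' = p ^ k' := by
    have := Finset.card_eq_sum_card_fiberwise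
      (f := φ) (s := (Finset.univ : Finset (ZMod (p^k')))) (t := Finset.univ)
      (fun _ _ => Finset.mem_univ _)
    rw [Finset.card_univ, ZMod.card] at this
    exact this.symm
  have htot' : (p ^ k) * c a = p ^ k' := by
    rw [← htot]
    rw [Finset.sum_congr rfl (fun a' _ => heq a' a)]
    simp [Finset.card_univ, ZMod.card, mul_comm]
  have hpk : 0 < p ^ k := pow_pos (Nat.Prime.pos Fact.out) _
  have : (p ^ k) * c a = (p ^ k) * p ^ (k' - k) := by
    rw [htot', ← pow_add]
    congr 1
    omega
  exact Nat.eq_of_mul_eq_mul_left hpk this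

lemma resCount_split (p : ℕ) [Fact p.Prime] (x : ℕ → ℤ_[p]) (N : ℕ) (k k' : ℕ) (h : k ≤ k')
    (a : ZMod (p^k)) :
    resCount p x N k a = ∑ b ∈ (Finset.univ.filter fun b : ZMod (p^k') =>
      ZMod.castHom (pow_dvd_pow p h) (ZMod (p^k)) b = a), resCount p x N k' b := by
  classical
  set φ := ZMod.castHom (pow_dvd_pow p h) (ZMod (p^k)) with hφ
  have hcomp : ∀ y : ℤ_[p], φ (PadicInt.toZModPow k' y) = PadicInt.toZModPow k y := by
    intro y
    exact RingHom.congr_fun (PadicInt.zmod_cast_comp_toZModPow k k' h) y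
  rw [resCount, Finset.card_eq_sum_card_fiberwise
    (f := fun n => PadicInt.toZModPow k' (x n))
    (t := (Finset.univ.filter fun b : ZMod (p^k') => φ b = a))
    (fun n hn => by
      simp only [Finset.mem_filter] at hn ⊢
      exact Finset.mem_filter.mpr ⟨Finset.mem_univ _,
        (by rw [hcomp, (Finset.mem_filter.mp (Finset.mem_coe.mp hn)).2] : φ (PadicInt.toZModPow k' (x n)) = a)⟩)]
  apply Finset.sum_congr rfl
  intro b hb
  simp only [Finset.mem_filter, Finset.mem_univ, true_and] at hb
  rw [Finset.filter_filter, resCount]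
  congr 1
  apply Finset.filter_congr
  intro n _
  constructor
  · rintro ⟨_, h2⟩; exact h2
  · intro h2; exact ⟨by rw [← hb, ← h2, hcomp], h2⟩

lemma resCount_mono (p : ℕ) [Fact p.Prime] (x : ℕ → ℤ_[p]) (N : ℕ) (k k' : ℕ) (h : k ≤ k')
    (z : ℤ_[p]) :
    resCount p x N k' (PadicInt.toZModPow k' z) ≤ resCount p x N k (PadicInt.toZModPow k z) := by
  classical
  apply Finset.card_le_card
  intro n hn
  simp only [Finset.mem_filter] at hn ⊢
  refine ⟨hn.1, ?_⟩
  have hcomp : ∀ y : ℤ_[p], (ZMod.castHom (pow_dvd_pow p h) (ZMod (p^k)))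
      (PadicInt.toZModPow k' y) = PadicInt.toZModPow k y := fun y =>
    RingHom.congr_fun (PadicInt.zmod_cast_comp_toZModPow k k' h) y
  rw [← hcomp, ← hcomp, hn.2]

lemma padicBall_zero_eq (p : ℕ) [Fact p.Prime] (k : ℕ) (r : ℝ)
    (h1 : (p : ℝ) ^ (-(k:ℤ)) ≤ r) (h2 : r < (p : ℝ) ^ (-(k:ℤ) + 1)) :
    padicBall p 0 r = {y : ℤ_[p] | PadicInt.toZModPow k y = 0} := by
  ext y
  simp only [padicBall, Set.mem_setOf_eq, sub_zero]
  rw [← show (‖y‖ ≤ (p : ℝ) ^ (-(k:ℤ)) ↔ PadicInt.toZModPow k y = 0) by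
    rw [PadicInt.norm_le_pow_iff_mem_span_pow, ← PadicInt.ker_toZModPow, RingHom.mem_ker]]
  constructor
  · intro h
    rw [PadicInt.norm_le_pow_iff_norm_lt_pow_add_one]
    exact lt_of_le_of_lt h h2
  · intro h; exact le_trans h h1

lemma variance_of_pairbound (p : ℕ) [Fact p.Prime] [MeasurableSpace ℤ_[p]] [BorelSpace ℤ_[p]]
    (μ : Measure ℤ_[p]) [μ.IsAddHaarMeasure] [IsProbabilityMeasure μ]
    (x : ℕ → ℤ_[p]) (α : ℝ) (N s k : ℕ) (hN : 1 ≤ N) (hα0 : 0 < α) (F0 : ℝ)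
    (hlow : (p : ℝ) ^ (-(k:ℤ)) < (s : ℝ) / (N : ℝ) ^ α)
    (hhigh : (s : ℝ) / (N : ℝ) ^ α < (p : ℝ) ^ (-(k:ℤ) + 1))
    (hFi : |((N : ℝ) ^ (-α) / (μ (padicBall p 0 ((s : ℝ) / (N : ℝ) ^ α))).toReal) *
        (pairCountLt p x N ((s : ℝ) / (N : ℝ) ^ α) : ℝ) - (N : ℝ) ^ (2 - α)| < F0) :
    ∑ a : ZMod (p^k), ((resCount p x N k a : ℝ) - (N : ℝ) * (p : ℝ) ^ (-(k:ℤ)))^2 ≤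
      (N : ℝ) + (N : ℝ) ^ α * F0 * (p : ℝ) ^ (-(k:ℤ)) := by
  have hp1 : (1 : ℝ) < p := by exact_mod_cast (Fact.out : p.Prime).one_lt
  have hp0 : (0 : ℝ) < p := by linarith
  have hNR : (0 : ℝ) < N := by exact_mod_cast hN
  set A := (N : ℝ) ^ α with hA
  have hA0 : 0 < A := Real.rpow_pos_of_pos hNR α
  set m := (p : ℝ) ^ (-(k:ℤ)) with hm
  have hm0 : 0 < m := zpow_pos hp0 _
  set M := (p : ℝ) ^ (k : ℕ) with hM
  have hM0 : 0 < M := pow_pos hp0 _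
  have hmM : m * M = 1 := by
    rw [hm, hM, ← zpow_natCast (p : ℝ) k, ← zpow_add₀ (ne_of_gt hp0)]
    simp
  -- measure of the ball
  have hball : (μ (padicBall p 0 ((s : ℝ) / (N : ℝ) ^ α))).toReal = m := by
    rw [padicBall_zero_eq p k _ (le_of_lt hlow) hhigh, measure_res p μ k]
    rw [ENNReal.toReal_inv, hm, zpow_neg, zpow_natCast]
    norm_num
  -- pairCountLt
  have hPC : (pairCountLt p x N ((s : ℝ) / (N : ℝ) ^ α) : ℝ) =
      (∑ a : ZMod (p^k), ((resCount p x N k a : ℝ))^2) - N := by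
    have := pairCountLt_eq p x N k _ hlow (le_of_lt hhigh)
    have := congrArg (fun t : ℕ => (t : ℝ)) this
    push_cast at this
    linarith
  rw [hball, hPC] at hFi
  have hNα : (N : ℝ) ^ (-α) = A⁻¹ := by rw [hA, ← Real.rpow_neg (le_of_lt hNR)]
  have hN2 : (N : ℝ) ^ (2 - α) * A = (N : ℝ) ^ 2 := by
    rw [hA, ← Real.rpow_add hNR]
    norm_num
  set Q := ∑ a : ZMod (p^k), ((resCount p x N k a : ℝ))^2 with hQ
  have key : Q - N < ((N : ℝ) ^ 2) * m + A * F0 * m := by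
    have h1 : (A⁻¹ / m) * (Q - N) - (N : ℝ) ^ (2 - α) < F0 := by
      rw [hNα] at hFi
      exact lt_of_le_of_lt (le_abs_self _) hFi
    have h2 : (A⁻¹ / m) * (Q - N) < F0 + (N : ℝ) ^ (2 - α) := by linarith
    have h3 : Q - N = (A * m) * ((A⁻¹ / m) * (Q - N)) := by
      field_simp
    rw [h3]
    calc (A * m) * ((A⁻¹ / m) * (Q - N)) < (A * m) * (F0 + (N : ℝ) ^ (2 - α)) := by
          apply mul_lt_mul_of_pos_left h2 (by positivity)
      _ = A * F0 * m + ((N : ℝ) ^ (2 - α) * A) * m := by ring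
      _ = ((N : ℝ) ^ 2) * m + A * F0 * m := by rw [hN2]; ring
  -- variance identity
  have hsum : ∑ a : ZMod (p^k), (resCount p x N k a : ℝ) = N := by
    have := congrArg (fun t : ℕ => (t : ℝ)) (sum_resCount p x N k)
    push_cast at this
    exact this
  have hcard : (Finset.univ : Finset (ZMod (p^k))).card = p ^ k := by
    haveI : NeZero (p ^ k) := ⟨pow_ne_zero _ (Nat.Prime.ne_zero Fact.out)⟩
    rw [Finset.card_univ, ZMod.card]
  have hvar : ∑ a : ZMod (p^k), ((resCount p x N k a : ℝ) - (N : ℝ) * m)^2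
      = Q - (N : ℝ)^2 * m := by
    have expand : ∀ a : ZMod (p^k), ((resCount p x N k a : ℝ) - (N : ℝ) * m)^2
        = ((resCount p x N k a : ℝ))^2 - 2 * ((N:ℝ) * m) * (resCount p x N k a : ℝ)
          + ((N:ℝ) * m)^2 := by intro a; ring
    rw [Finset.sum_congr rfl (fun a _ => expand a)]
    rw [Finset.sum_add_distrib, Finset.sum_sub_distrib, ← Finset.mul_sum, hsum,
      Finset.sum_const, hcard, nsmul_eq_mul]
    have hMc : ((p ^ k : ℕ) : ℝ) = M := by rw [hM]; push_cast; ring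
    rw [hMc]
    have : M * ((N:ℝ) * m)^2 = (N:ℝ)^2 * m * (m * M) := by ring
    rw [this, hmM]
    ring
  rw [hvar]
  linarith

lemma sqrt_add_le' (a b : ℝ) (ha : 0 ≤ a) (hb : 0 ≤ b) :
    Real.sqrt (a + b) ≤ Real.sqrt a + Real.sqrt b := by
  nlinarith [Real.sq_sqrt ha, Real.sq_sqrt hb, Real.sq_sqrt (add_nonneg ha hb),
    Real.sqrt_nonneg a, Real.sqrt_nonneg b, Real.sqrt_nonneg (a + b),
    mul_nonneg (Real.sqrt_nonneg a) (Real.sqrt_nonneg b)]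

set_option maxHeartbeats 1000000 in

set_option maxHeartbeats 1000000 in
theorem discrepancy_bound_of_pairCorrelation_bound
    (p : ℕ) [Fact p.Prime] [MeasurableSpace ℤ_[p]] [BorelSpace ℤ_[p]]
    (μ : Measure ℤ_[p]) [μ.IsAddHaarMeasure] [IsProbabilityMeasure μ]
    (α : ℝ) (hα0 : 0 < α) (hα1 : α ≤ 1) (x : ℕ → ℤ_[p])
    (F : ℕ × ℕ → ℝ)
    (hmono : ∀ K K' N : ℕ, K ≤ K' → F (K, N) ≤ F (K', N))
    (hF : ∀ N K : ℕ, (K : ℝ) ≤ (N : ℝ) / 2 → ∀ s : ℕ, 1 ≤ s → s ≤ K →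
      |((N : ℝ) ^ (-α) / (μ (padicBall p 0 ((s : ℝ) / (N : ℝ) ^ α))).toReal) *
          (pairCountLt p x N ((s : ℝ) / (N : ℝ) ^ α) : ℝ) - (N : ℝ) ^ (2 - α)| < F (K, N)) :
    ∃ N₀ : ℕ, 0 < N₀ ∧ ∀ N : ℕ, N₀ ≤ N → ∀ K : ℕ,
      (1 / 2 : ℝ) * (N : ℝ) ^ ((2 / 5 : ℝ) * α) ≤ (K : ℝ) →
      (K : ℝ) ≤ (N : ℝ) ^ ((2 / 5 : ℝ) * α) →
      (N : ℝ) * padicDiscrepancy p x N ≤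
        5 * max ((N : ℝ) ^ (1 - (1 / 5 : ℝ) * α))
          (Real.sqrt ((N : ℝ) ^ α * F (K ^ 2, N))) := by
  have hp : p.Prime := Fact.out
  have hp1R : (1:ℝ) < p := by exact_mod_cast hp.one_lt
  have hp0R : (0:ℝ) < p := by linarith
  have hp2R : (2:ℝ) ≤ p := by exact_mod_cast hp.two_le
  -- eventual conditions
  have hrp : ∀ γ : ℝ, 0 < γ → ∀ C : ℝ, ∀ᶠ N : ℕ in atTop, C ≤ (N:ℝ) ^ γ := by
    intro γ hγ C
    exact ((tendsto_rpow_atTop hγ).comp tendsto_natCast_atTop_atTop).eventually_ge_atTop C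
  have hev : ∀ᶠ N : ℕ in atTop, ((2:ℝ) ≤ (N:ℝ) ∧ (2:ℝ) ≤ (N:ℝ) ^ ((1:ℝ)/10))
      ∧ ((8*p : ℝ) ≤ (N:ℝ) ^ ((4/5:ℝ)*α) ∧ (8*p : ℝ) ≤ (N:ℝ) ^ (1-(3/5:ℝ)*α)) := by
    refine Filter.Eventually.and (Filter.Eventually.and ?_ ?_) (Filter.Eventually.and ?_ ?_)
    · exact tendsto_natCast_atTop_atTop.eventually_ge_atTop 2
    · exact hrp _ (by norm_num) 2
    · exact hrp _ (by positivity) _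
    · exact hrp _ (by nlinarith) _
  obtain ⟨N₀, hN₀⟩ := Filter.eventually_atTop.mp hev
  refine ⟨max N₀ 1, by positivity, ?_⟩
  intro N hNN₀ K hKlow hKhigh
  obtain ⟨⟨hN2R, hE2⟩, hE3, hE4⟩ := hN₀ N (le_trans (le_max_left _ _) hNN₀)
  have hN1R : (1:ℝ) ≤ N := by linarith
  have hN0R : (0:ℝ) < N := by linarith
  have hNn : 1 ≤ N := by exact_mod_cast (by exact_mod_cast hN1R : (1:ℝ) ≤ (N:ℝ)) -- fix
  set A := (N : ℝ) ^ α with hA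
  have hA0 : 0 < A := Real.rpow_pos_of_pos hN0R α
  have hA1 : 1 < A := by
    have := Real.rpow_lt_rpow_of_exponent_lt (show (1:ℝ) < N by linarith) hα0
    rwa [Real.rpow_zero] at this
  have hAN : A ≤ (N:ℝ) := by
    have := Real.rpow_le_rpow_of_exponent_le hN1R hα1
    rwa [Real.rpow_one] at this
  -- basic facts about K
  have hNpow_pos : ∀ e : ℝ, (0:ℝ) < (N:ℝ) ^ e := fun e => Real.rpow_pos_of_pos hN0R e
  have hK0 : (0:ℝ) < K := by
    have := hNpow_pos ((2/5:ℝ)*α)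
    linarith
  have hrpow_two : ∀ e : ℝ, ((N:ℝ) ^ e) ^ 2 = (N:ℝ) ^ (2*e) := by
    intro e
    rw [sq, ← Real.rpow_add hN0R]
    congr 1; ring
  have hK2high : (K:ℝ)^2 ≤ (N:ℝ) ^ ((4/5:ℝ)*α) := by
    have := pow_le_pow_left₀ (le_of_lt hK0) hKhigh 2
    rw [hrpow_two] at this
    convert this using 2
    · rfl
    · ring
  have hK2low : (N:ℝ) ^ ((4/5:ℝ)*α) / 4 ≤ (K:ℝ)^2 := by
    have h := pow_le_pow_left₀ (by positivity) hKlow 2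
    rw [mul_pow, hrpow_two] at h
    have : ((1/2:ℝ))^2 * (N:ℝ)^(2*((2/5:ℝ)*α)) = (N:ℝ)^((4/5:ℝ)*α)/4 := by
      rw [show 2*((2/5:ℝ)*α) = (4/5:ℝ)*α by ring]
      ring
    linarith [h, this.symm.le]
  have hK2N : ((K^2 : ℕ) : ℝ) ≤ (N:ℝ) / 2 := by
    push_cast
    have h1 : (N:ℝ) ^ ((4/5:ℝ)*α) ≤ (N:ℝ) ^ ((9/10:ℝ)) :=
      Real.rpow_le_rpow_of_exponent_le hN1R (by nlinarith)
    have h2 : (N:ℝ) ^ ((9/10:ℝ)) * 2 ≤ (N:ℝ) ^ ((9/10:ℝ)) * (N:ℝ) ^ ((1:ℝ)/10) :=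
      mul_le_mul_of_nonneg_left hE2 (by positivity)
    have h3 : (N:ℝ) ^ ((9/10:ℝ)) * (N:ℝ) ^ ((1:ℝ)/10) = (N:ℝ) := by
      rw [← Real.rpow_add hN0R]
      norm_num
    linarith [hK2high]
  set F₀ := F (K^2, N) with hF₀def
  -- scale range
  set X := 2 * A / (K:ℝ)^2 with hX
  have hX0 : 0 < X := by positivity
  have hNe5 : A / (N:ℝ) ^ ((4/5:ℝ)*α) = (N:ℝ) ^ ((1/5:ℝ)*α) := by
    rw [hA, ← Real.rpow_sub hN0R]
    congr 1; ring
  have hN5_ge1 : (1:ℝ) ≤ (N:ℝ) ^ ((1/5:ℝ)*α) := by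
    have := Real.rpow_le_rpow_of_exponent_le hN1R (show (0:ℝ) ≤ (1/5:ℝ)*α by positivity)
    rwa [Real.rpow_zero] at this
  have hX2 : 2 ≤ X := by
    have h1 : 2 * A / (N:ℝ) ^ ((4/5:ℝ)*α) ≤ X := by
      rw [hX]
      gcongr
    have h2 : 2 * A / (N:ℝ) ^ ((4/5:ℝ)*α) = 2 * (N:ℝ) ^ ((1/5:ℝ)*α) := by
      rw [mul_div_assoc, hNe5]
    nlinarith [hN5_ge1]
  have hXle : X ≤ 8 * (N:ℝ) ^ ((1/5:ℝ)*α) := by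
    have h1 : X ≤ 2 * A / ((N:ℝ) ^ ((4/5:ℝ)*α) / 4) := by
      rw [hX]
      gcongr
    have h2 : 2 * A / ((N:ℝ) ^ ((4/5:ℝ)*α) / 4) = 8 * (N:ℝ) ^ ((1/5:ℝ)*α) := by
      rw [div_div_eq_mul_div, show (2:ℝ) * A * 4 = 8 * A by ring, mul_div_assoc, hNe5]
    linarith
  obtain ⟨kex, hkex⟩ := pow_unbounded_of_one_lt X hp1R
  have hXex : ∃ n : ℕ, X ≤ (p:ℝ)^n := ⟨kex, le_of_lt hkex⟩
  set k₀ := Nat.find hXex with hk₀def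
  have hk₀spec : X ≤ (p:ℝ)^k₀ := Nat.find_spec hXex
  have hk₀pos : 0 < k₀ := by
    rcases Nat.eq_zero_or_pos k₀ with h | h
    · exfalso
      rw [h] at hk₀spec
      norm_num at hk₀spec
      linarith
    · exact h
  have hpk₀up : (p:ℝ)^k₀ < (p:ℝ) * X := by
    have hpred : ¬ (X ≤ (p:ℝ)^(k₀-1)) := Nat.find_min hXex (by omega)
    push_neg at hpred
    have : (p:ℝ)^k₀ = (p:ℝ) * (p:ℝ)^(k₀-1) := by
      rw [← pow_succ']
      congr 1
      omega
    rw [this]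
    exact mul_lt_mul_of_pos_left hpred hp0R
  have hpk₀A : (p:ℝ)^k₀ < A := by
    have h1 : (p:ℝ) * X ≤ (p:ℝ) * (8 * (N:ℝ) ^ ((1/5:ℝ)*α)) :=
      mul_le_mul_of_nonneg_left hXle (le_of_lt hp0R)
    have h2 : (p:ℝ) * (8 * (N:ℝ) ^ ((1/5:ℝ)*α)) = (8*p) * (N:ℝ) ^ ((1/5:ℝ)*α) := by ring
    have h3 : (8*p:ℝ) * (N:ℝ) ^ ((1/5:ℝ)*α) ≤ (N:ℝ) ^ ((4/5:ℝ)*α) * (N:ℝ) ^ ((1/5:ℝ)*α) := by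
      apply mul_le_mul_of_nonneg_right hE3 (by positivity)
    have h4 : (N:ℝ) ^ ((4/5:ℝ)*α) * (N:ℝ) ^ ((1/5:ℝ)*α) = A := by
      rw [← Real.rpow_add hN0R, hA]
      congr 1; ring
    linarith [hpk₀up]
  have hpow_gtN : ∀ n : ℕ, (n:ℝ) < (p:ℝ)^n := by
    intro n
    calc (n:ℝ) < (2:ℝ)^n := by exact_mod_cast Nat.lt_two_pow_self
      _ ≤ (p:ℝ)^n := pow_le_pow_left₀ (by norm_num) hp2R n
  set k₁ := Nat.findGreatest (fun k => (p:ℝ)^k < A) N with hk₁def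
  have hk₁P : (p:ℝ)^k₁ < A := by
    have := Nat.findGreatest_spec (P := fun k => (p:ℝ)^k < A) (m := 0) (Nat.zero_le N)
      (by simpa using hA1)
    exact this
  have hk_lt_N : ∀ k : ℕ, (p:ℝ)^k < A → k < N := by
    intro k hk
    by_contra h
    push_neg at h
    have : (N:ℝ) ≤ (p:ℝ)^k := by
      calc (N:ℝ) ≤ (k:ℝ) := by exact_mod_cast h
        _ ≤ (p:ℝ)^k := le_of_lt (hpow_gtN k)
    linarith [hAN]
  have hk₁up : A ≤ (p:ℝ)^(k₁+1) := by
    by_contra h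
    push_neg at h
    have hle : k₁ + 1 ≤ N := by
      have := hk_lt_N (k₁+1) h
      omega
    have := Nat.le_findGreatest (P := fun k => (p:ℝ)^k < A) hle h
    rw [← hk₁def] at this
    omega
  have hk₀k₁ : k₀ ≤ k₁ := Nat.le_findGreatest (le_of_lt (hk_lt_N k₀ hpk₀A)) hpk₀A
  -- controlled scales
  have hctrl : ∀ k : ℕ, k₀ ≤ k → k ≤ k₁ → ∃ s : ℕ, 1 ≤ s ∧ s ≤ K^2 ∧
      (p:ℝ)^(-(k:ℤ)) < (s:ℝ) / A ∧ (s:ℝ) / A < (p:ℝ)^(-(k:ℤ)+1) := by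
    intro k hk0 hk1
    have hpk0 : (0:ℝ) < (p:ℝ)^k := by positivity
    set m := (p:ℝ)^(-(k:ℤ)) with hm
    have hminv : m = ((p:ℝ)^k)⁻¹ := by rw [hm, zpow_neg, zpow_natCast]
    have hm0 : 0 < m := by rw [hminv]; positivity
    have hAm1 : 1 < A * m := by
      have hk : (p:ℝ)^k ≤ (p:ℝ)^k₁ := pow_le_pow_right₀ (le_of_lt hp1R) hk1
      have hlt : (p:ℝ)^k < A := lt_of_le_of_lt hk hk₁P
      rw [hminv, ← div_eq_mul_inv, lt_div_iff₀ hpk0, one_mul]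
      exact hlt
    set s := ⌊A * m⌋₊ + 1 with hs
    have hsgt : A * m < (s:ℝ) := by
      rw [hs]
      push_cast
      exact Nat.lt_floor_add_one _
    have hsle : (s:ℝ) ≤ A * m + 1 := by
      rw [hs]
      push_cast
      have := Nat.floor_le (show (0:ℝ) ≤ A * m by positivity)
      linarith
    have hslt2 : (s:ℝ) < 2 * (A * m) := by linarith
    refine ⟨s, by omega, ?_, ?_, ?_⟩
    · -- s ≤ K^2
      have hmk₀ : m ≤ ((p:ℝ)^k₀)⁻¹ := by
        rw [hminv]
        apply inv_anti₀ (by positivity)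
        exact pow_le_pow_right₀ (le_of_lt hp1R) hk0
      have hinvX : ((p:ℝ)^k₀)⁻¹ ≤ X⁻¹ := by
        apply inv_anti₀ hX0 hk₀spec
      have h2AX : 2 * A * X⁻¹ = (K:ℝ)^2 := by
        rw [hX]
        field_simp
      have : (s:ℝ) < (K:ℝ)^2 := by
        calc (s:ℝ) < 2 * (A * m) := hslt2
          _ ≤ 2 * (A * X⁻¹) := by
              apply mul_le_mul_of_nonneg_left _ (by norm_num)
              apply mul_le_mul_of_nonneg_left (le_trans hmk₀ hinvX) (le_of_lt hA0)
          _ = (K:ℝ)^2 := by rw [← h2AX]; ring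
      exact_mod_cast this.le
    · rw [lt_div_iff₀ hA0]
      linarith [hsgt]
    · rw [div_lt_iff₀ hA0]
      have hrw : (p:ℝ)^(-(k:ℤ)+1) = (p:ℝ) * m := by
        rw [zpow_add₀ (ne_of_gt hp0R), zpow_one, hm]
        ring
      rw [hrw]
      calc (s:ℝ) < 2 * (A * m) := hslt2
        _ ≤ (p:ℝ) * (A * m) := by
            apply mul_le_mul_of_nonneg_right hp2R (by positivity)
        _ = (p:ℝ) * m * A := by ring
  -- F₀ positive
  have hF₀pos : 0 < F₀ := by
    obtain ⟨s, hs1, hsK, hlo, hhi⟩ := hctrl k₀ le_rfl hk₀k₁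
    calc (0:ℝ) ≤ |((N : ℝ) ^ (-α) / (μ (padicBall p 0 ((s : ℝ) / (N : ℝ) ^ α))).toReal) *
        (pairCountLt p x N ((s : ℝ) / (N : ℝ) ^ α) : ℝ) - (N : ℝ) ^ (2 - α)| := abs_nonneg _
      _ < F₀ := hF N (K^2) hK2N s hs1 hsK
  -- variance bound at controlled scales
  have hVar : ∀ k : ℕ, k₀ ≤ k → k ≤ k₁ →
      ∑ a : ZMod (p^k), ((resCount p x N k a : ℝ) - (N : ℝ) * (p : ℝ) ^ (-(k:ℤ)))^2 ≤
        (N : ℝ) + A * F₀ * (p : ℝ) ^ (-(k:ℤ)) := by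
    intro k hk0 hk1
    obtain ⟨s, hs1, hsK, hlo, hhi⟩ := hctrl k hk0 hk1
    exact variance_of_pairbound p μ x α N s k hNn hα0 F₀ hlo hhi (hF N (K^2) hK2N s hs1 hsK)
  -- bound quantities
  set B1 := (N:ℝ) ^ (1 - (1/5:ℝ)*α) with hB1
  set B2 := Real.sqrt (A * F₀) with hB2
  have hB1pos : 0 < B1 := hNpow_pos _
  have hB2nn : 0 ≤ B2 := Real.sqrt_nonneg _
  have hsqrtN : Real.sqrt (N:ℝ) ≤ B1 := by
    rw [Real.sqrt_eq_rpow, hB1]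
    exact Real.rpow_le_rpow_of_exponent_le hN1R (by linarith)
  have hAF₀ : 0 ≤ A * F₀ := by positivity
  have hm01 : ∀ k : ℕ, 0 ≤ (p:ℝ)^(-(k:ℤ)) ∧ (p:ℝ)^(-(k:ℤ)) ≤ 1 := by
    intro k
    constructor
    · positivity
    · rw [zpow_neg, zpow_natCast]
      have h1 : (1:ℝ) ≤ (p:ℝ)^k := one_le_pow₀ (le_of_lt hp1R)
      exact inv_le_one_of_one_le₀ h1
  have hsqrtNAF : ∀ r : ℝ, 0 ≤ r → r ≤ 1 → Real.sqrt ((N:ℝ) + A * F₀ * r) ≤ B1 + B2 := by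
    intro r h0 h1
    calc Real.sqrt ((N:ℝ) + A*F₀*r) ≤ Real.sqrt ((N:ℝ) + A*F₀) := by
          apply Real.sqrt_le_sqrt
          nlinarith [mul_le_mul_of_nonneg_left h1 hAF₀]
      _ ≤ Real.sqrt (N:ℝ) + Real.sqrt (A*F₀) :=
          sqrt_add_le' _ _ (by positivity) hAF₀
      _ ≤ B1 + B2 := by rw [hB2]; linarith
  -- Case 1 : controlled scales
  have hsingle : ∀ k : ℕ, k₀ ≤ k → k ≤ k₁ → ∀ a : ZMod (p^k),
      |(resCount p x N k a : ℝ) - (N:ℝ) * (p:ℝ)^(-(k:ℤ))| ≤ B1 + B2 := by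
    intro k h0 h1 a
    have hv := hVar k h0 h1
    have hterm : ((resCount p x N k a : ℝ) - (N:ℝ)*(p:ℝ)^(-(k:ℤ)))^2 ≤
        (N:ℝ) + A * F₀ * (p:ℝ)^(-(k:ℤ)) := by
      refine le_trans ?_ hv
      exact Finset.single_le_sum (f := fun b : ZMod (p^k) =>
        ((resCount p x N k b : ℝ) - (N:ℝ)*(p:ℝ)^(-(k:ℤ)))^2)
        (fun b _ => sq_nonneg _) (Finset.mem_univ a)
    rw [← Real.sqrt_sq_eq_abs]
    exact le_trans (Real.sqrt_le_sqrt hterm) (hsqrtNAF _ (hm01 k).1 (hm01 k).2)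
  -- Case 2 : coarse scales
  have hpk₀8 : (p:ℝ)^k₀ ≤ 8*(p:ℝ)*(N:ℝ)^((1/5:ℝ)*α) := by
    have := mul_le_mul_of_nonneg_left hXle (le_of_lt hp0R)
    have hr : (p:ℝ) * (8 * (N:ℝ)^((1/5:ℝ)*α)) = 8*(p:ℝ)*(N:ℝ)^((1/5:ℝ)*α) := by ring
    linarith [hpk₀up]
  have hB1sq : B1*B1 = (N:ℝ)^(2-(2/5:ℝ)*α) := by
    rw [hB1, ← Real.rpow_add hN0R]
    congr 1; ring
  have hNrw : (N:ℝ)^(1-(3/5:ℝ)*α) * ((N:ℝ)^((1/5:ℝ)*α) * (N:ℝ)^((1:ℝ))) =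
      (N:ℝ)^(2-(2/5:ℝ)*α) := by
    rw [← Real.rpow_add hN0R, ← Real.rpow_add hN0R]
    congr 1; ring
  have hpk₀N : (p:ℝ)^k₀ * (N:ℝ) ≤ (4*B1)^2 := by
    rw [Real.rpow_one] at hNrw
    have h1 : (p:ℝ)^k₀ * (N:ℝ) ≤ (8*(p:ℝ)) * ((N:ℝ)^((1/5:ℝ)*α) * (N:ℝ)) := by
      have := mul_le_mul_of_nonneg_right hpk₀8 (le_of_lt hN0R)
      have hr : 8*(p:ℝ)*(N:ℝ)^((1/5:ℝ)*α) * (N:ℝ) = (8*(p:ℝ)) * ((N:ℝ)^((1/5:ℝ)*α) * (N:ℝ)) := by ring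
      linarith
    have h2 : (8*(p:ℝ)) * ((N:ℝ)^((1/5:ℝ)*α) * (N:ℝ)) ≤
        (N:ℝ)^(1-(3/5:ℝ)*α) * ((N:ℝ)^((1/5:ℝ)*α) * (N:ℝ)) := by
      apply mul_le_mul_of_nonneg_right hE4 (by positivity)
    have h3 : (N:ℝ)^(2-(2/5:ℝ)*α) ≤ 16*(B1*B1) := by
      rw [hB1sq]
      linarith [hNpow_pos (2-(2/5:ℝ)*α)]
    have h4 : (4*B1)^2 = 16*(B1*B1) := by ring
    linarith
  have hcoarse : ∀ k : ℕ, k < k₀ → ∀ a : ZMod (p^k),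
      |(resCount p x N k a : ℝ) - (N:ℝ)*(p:ℝ)^(-(k:ℤ))| ≤ 4*B1 + B2 := by
    intro k hk a
    have hkk₀ : k ≤ k₀ := le_of_lt hk
    set t := Finset.univ.filter (fun b : ZMod (p^k₀) =>
      ZMod.castHom (pow_dvd_pow p hkk₀) (ZMod (p^k)) b = a) with ht
    have hcardt : t.card = p^(k₀-k) := card_castHom_fiber p k k₀ hkk₀ a
    have hcastpow : ((p^(k₀-k) : ℕ) : ℝ) = (p:ℝ)^((k₀:ℤ) - (k:ℤ)) := by
      rw [Nat.cast_pow, ← zpow_natCast]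
      congr 1
      omega
    have hNm : (N:ℝ) * (p:ℝ)^(-(k:ℤ)) = ∑ _b ∈ t, (N:ℝ)*(p:ℝ)^(-(k₀:ℤ)) := by
      rw [Finset.sum_const, hcardt, nsmul_eq_mul, hcastpow]
      rw [show (p:ℝ)^((k₀:ℤ) - (k:ℤ)) * ((N:ℝ)*(p:ℝ)^(-(k₀:ℤ)))
          = (N:ℝ) * ((p:ℝ)^((k₀:ℤ) - (k:ℤ)) * (p:ℝ)^(-(k₀:ℤ))) by ring,
        ← zpow_add₀ (ne_of_gt hp0R)]
      congr 2
      ring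
    have h1 : (resCount p x N k a : ℝ) - (N:ℝ)*(p:ℝ)^(-(k:ℤ))
        = ∑ b ∈ t, ((resCount p x N k₀ b : ℝ) - (N:ℝ)*(p:ℝ)^(-(k₀:ℤ))) := by
      rw [Finset.sum_sub_distrib, ← hNm]
      congr 1
      rw [resCount_split p x N k k₀ hkk₀ a]
      push_cast
      rfl
    have htri : |(resCount p x N k a : ℝ) - (N:ℝ)*(p:ℝ)^(-(k:ℤ))| ≤
        ∑ b : ZMod (p^k₀), |(resCount p x N k₀ b : ℝ) - (N:ℝ)*(p:ℝ)^(-(k₀:ℤ))| := by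
      rw [h1]
      refine le_trans (Finset.abs_sum_le_sum_abs _ _) ?_
      exact Finset.sum_le_sum_of_subset_of_nonneg (Finset.subset_univ t)
        (fun _ _ _ => abs_nonneg _)
    have hCS : (∑ b : ZMod (p^k₀), |(resCount p x N k₀ b : ℝ) - (N:ℝ)*(p:ℝ)^(-(k₀:ℤ))|)^2 ≤
        ((p:ℝ)^k₀) * ((N:ℝ) + A*F₀*(p:ℝ)^(-(k₀:ℤ))) := by
      haveI : NeZero (p ^ k₀) := ⟨pow_ne_zero _ hp.ne_zero⟩
      have hcs := sq_sum_le_card_mul_sum_sq (s := (Finset.univ : Finset (ZMod (p^k₀))))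
        (f := fun b => |(resCount p x N k₀ b : ℝ) - (N:ℝ)*(p:ℝ)^(-(k₀:ℤ))|)
      have hcard : ((Finset.univ : Finset (ZMod (p^k₀))).card : ℝ) = (p:ℝ)^k₀ := by
        rw [Finset.card_univ, ZMod.card]
        push_cast
        ring
      rw [hcard] at hcs
      refine le_trans hcs ?_
      apply mul_le_mul_of_nonneg_left _ (by positivity)
      refine le_trans ?_ (hVar k₀ le_rfl hk₀k₁)
      apply le_of_eq
      apply Finset.sum_congr rfl
      intro b _
      rw [sq_abs]
    have hsplit2 : ((p:ℝ)^k₀) * ((N:ℝ) + A*F₀*(p:ℝ)^(-(k₀:ℤ)))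
        = (p:ℝ)^k₀ * (N:ℝ) + A*F₀ := by
      have hmm : (p:ℝ)^k₀ * (p:ℝ)^(-(k₀:ℤ)) = 1 := by
        rw [← zpow_natCast (p:ℝ) k₀, ← zpow_add₀ (ne_of_gt hp0R)]
        simp
      calc ((p:ℝ)^k₀) * ((N:ℝ) + A*F₀*(p:ℝ)^(-(k₀:ℤ)))
          = (p:ℝ)^k₀ * (N:ℝ) + A*F₀*((p:ℝ)^k₀ * (p:ℝ)^(-(k₀:ℤ))) := by ring
        _ = (p:ℝ)^k₀ * (N:ℝ) + A*F₀ := by rw [hmm]; ring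
    have hsum_nonneg : 0 ≤ ∑ b : ZMod (p^k₀),
        |(resCount p x N k₀ b : ℝ) - (N:ℝ)*(p:ℝ)^(-(k₀:ℤ))| :=
      Finset.sum_nonneg fun _ _ => abs_nonneg _
    have hfin : ∑ b : ZMod (p^k₀), |(resCount p x N k₀ b : ℝ) - (N:ℝ)*(p:ℝ)^(-(k₀:ℤ))|
        ≤ 4*B1 + B2 := by
      have h2 : (∑ b : ZMod (p^k₀), |(resCount p x N k₀ b : ℝ) - (N:ℝ)*(p:ℝ)^(-(k₀:ℤ))|)^2
          ≤ (p:ℝ)^k₀ * (N:ℝ) + A*F₀ := by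
        rw [← hsplit2]; exact hCS
      have h3 := Real.sqrt_le_sqrt h2
      rw [Real.sqrt_sq hsum_nonneg] at h3
      refine le_trans h3 ?_
      calc Real.sqrt ((p:ℝ)^k₀ * (N:ℝ) + A*F₀)
          ≤ Real.sqrt ((p:ℝ)^k₀ * (N:ℝ)) + Real.sqrt (A*F₀) :=
            sqrt_add_le' _ _ (by positivity) hAF₀
        _ ≤ 4*B1 + B2 := by
            have h4 := Real.sqrt_le_sqrt hpk₀N
            rw [Real.sqrt_sq (by positivity : (0:ℝ) ≤ 4*B1)] at h4
            rw [hB2]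
            linarith
    exact le_trans htri hfin
  -- Case 3 : fine scales
  have hfine : ∀ k : ℕ, k₁ < k → ∀ z : ℤ_[p],
      |(resCount p x N k (PadicInt.toZModPow k z) : ℝ) - (N:ℝ)*(p:ℝ)^(-(k:ℤ))|
        ≤ 4*B1 + B2 := by
    intro k hk z
    have hk₁k : k₁ ≤ k := le_of_lt hk
    have hmono' := resCount_mono p x N k₁ k hk₁k z
    have hm_le : (p:ℝ)^(-(k:ℤ)) ≤ (p:ℝ)^(-(k₁:ℤ)) :=
      zpow_le_zpow_right₀ (le_of_lt hp1R) (by omega)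
    have hmk₁ : (p:ℝ)^(-(k₁:ℤ)) ≤ (p:ℝ)/A := by
      have he : (p:ℝ)^(-(k₁:ℤ)) = (p:ℝ) / (p:ℝ)^((k₁+1 : ℕ)) := by
        rw [eq_div_iff (by positivity), ← zpow_natCast (p:ℝ) (k₁+1),
          ← zpow_add₀ (ne_of_gt hp0R)]
        rw [show -(k₁:ℤ) + (((k₁+1:ℕ)):ℤ) = 1 by push_cast; ring]
        simp
      rw [he]
      gcongr
    have hNmk₁ : (N:ℝ) * (p:ℝ)^(-(k₁:ℤ)) ≤ 3*B1 := by
      have h2 : (N:ℝ)^((1:ℝ)-α) = (N:ℝ) / A := by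
        have := Real.rpow_sub hN0R 1 α
        rwa [Real.rpow_one] at this
      have h5 : (N:ℝ) * ((p:ℝ)/A) = (p:ℝ) * (N:ℝ)^((1:ℝ)-α) := by
        rw [h2]; ring
      have h6 : (p:ℝ) * (N:ℝ)^((1:ℝ)-α) ≤ (N:ℝ)^((4/5:ℝ)*α) * (N:ℝ)^((1:ℝ)-α) := by
        apply mul_le_mul_of_nonneg_right _ (by positivity)
        linarith [hE3, hp0R]
      have h7 : (N:ℝ)^((4/5:ℝ)*α) * (N:ℝ)^((1:ℝ)-α) ≤ B1 := by
        rw [← Real.rpow_add hN0R, hB1]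
        apply Real.rpow_le_rpow_of_exponent_le hN1R
        linarith
      have h8 : (N:ℝ) * (p:ℝ)^(-(k₁:ℤ)) ≤ (N:ℝ) * ((p:ℝ)/A) :=
        mul_le_mul_of_nonneg_left hmk₁ (le_of_lt hN0R)
      linarith [hB1pos]
    have hup := hsingle k₁ hk₀k₁ le_rfl (PadicInt.toZModPow k₁ z)
    have hup' : (resCount p x N k₁ (PadicInt.toZModPow k₁ z) : ℝ)
        ≤ (N:ℝ)*(p:ℝ)^(-(k₁:ℤ)) + (B1 + B2) := by
      have := (abs_le.mp hup).2
      linarith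
    have hcc : (resCount p x N k (PadicInt.toZModPow k z) : ℝ)
        ≤ (resCount p x N k₁ (PadicInt.toZModPow k₁ z) : ℝ) := by exact_mod_cast hmono'
    have hcnn : (0:ℝ) ≤ (resCount p x N k (PadicInt.toZModPow k z) : ℝ) := by positivity
    have hNmk : (N:ℝ) * (p:ℝ)^(-(k:ℤ)) ≤ 3*B1 := by
      have := mul_le_mul_of_nonneg_left hm_le (le_of_lt hN0R)
      linarith
    have hNmknn : 0 ≤ (N:ℝ) * (p:ℝ)^(-(k:ℤ)) := by positivity
    rw [abs_le]
    constructor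
    · linarith
    · linarith
  -- combine all scales
  have hmain : ∀ (k : ℕ) (z : ℤ_[p]),
      |(resCount p x N k (PadicInt.toZModPow k z) : ℝ) - (N:ℝ)*(p:ℝ)^(-(k:ℤ))|
        ≤ 4*B1 + B2 := by
    intro k z
    rcases lt_or_ge k k₀ with h | h
    · exact hcoarse k h _
    · rcases le_or_gt k k₁ with h' | h'
      · exact le_trans (hsingle k h h' _) (by linarith)
      · exact hfine k h' z
  -- from counts to the discrepancy
  have hball_mem : ∀ (z y : ℤ_[p]) (k : ℕ),
      (y ∈ padicBall p z ((p:ℝ)^(-(k:ℤ)))) ↔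
        PadicInt.toZModPow k y = PadicInt.toZModPow k z := by
    intro z y k
    simp only [padicBall, Set.mem_setOf_eq]
    rw [PadicInt.norm_le_pow_iff_mem_span_pow, ← PadicInt.ker_toZModPow, RingHom.mem_ker,
      map_sub, sub_eq_zero]
  have hcount : ∀ (z : ℤ_[p]) (k : ℕ),
      ((Finset.Icc 1 N).filter fun n => x n ∈ padicBall p z ((p:ℝ)^(-(k:ℤ)))).card
        = resCount p x N k (PadicInt.toZModPow k z) := by
    intro z k
    rw [resCount]
    congr 1
    apply Finset.filter_congr
    intro n _
    exact hball_mem z (x n) k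
  have hD : padicDiscrepancy p x N ≤ (4*B1 + B2)/N := by
    rw [padicDiscrepancy]
    apply ciSup_le
    intro z
    apply ciSup_le
    intro k
    rw [hcount z k]
    have hrw : (resCount p x N k (PadicInt.toZModPow k z) : ℝ) / N - (p:ℝ)^(-(k:ℤ))
        = ((resCount p x N k (PadicInt.toZModPow k z) : ℝ) - (N:ℝ)*(p:ℝ)^(-(k:ℤ)))/N := by
      rw [eq_div_iff (ne_of_gt hN0R), sub_mul, div_mul_cancel₀ _ (ne_of_gt hN0R)]
      ring
    rw [hrw, abs_div, abs_of_pos hN0R]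
    first
      | exact div_le_div_of_le_of_nonneg (hmain k z) (le_of_lt hN0R)
      | exact div_le_div_of_nonneg_right (hmain k z) hN0R
      | exact (div_le_div_iff_of_pos_right hN0R).mpr (hmain k z)
  calc (N:ℝ) * padicDiscrepancy p x N ≤ (N:ℝ) * ((4*B1 + B2)/N) :=
        mul_le_mul_of_nonneg_left hD (le_of_lt hN0R)
    _ = 4*B1 + B2 := by field_simp
    _ ≤ 5 * max B1 B2 := by
        have h1 : B1 ≤ max B1 B2 := le_max_left _ _
        have h2 : B2 ≤ max B1 B2 := le_max_right _ _
        linarith
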